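/- Let X be a compact metric space and let f and g be convex, Gateaux differentiable functionals on C⁰(X) whose differentials df_u and dg_u belong to M₁(X) for every u ∈ C⁰(X). Set 𝓕(u) := −f(−u), so that d𝓕_u = df_{−u}. If u₀ ∈ C⁰(X) is a critical point of u ↦ 𝓕(u) − g(u), i.e. d𝓕_{u₀} = dg_{u₀}, then the measure μ₀ := d𝓕_{u₀} minimizes the functional μ ↦ f*(μ) + g*(μ) over M₁(X). -/
import Mathlib


open MeasureTheory Filter

/-- Integrability of a continuous map on a compact space w.r.t. a finite measure. -/
lemma cm_integrable {X : Type*} [MetricSpace X] [CompactSpace X]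
    [MeasurableSpace X] [BorelSpace X] (μ : Measure X) [IsFiniteMeasure μ]
    (u : C(X, ℝ)) : Integrable (fun x => u x) μ :=
  u.continuous.integrable_of_hasCompactSupport (HasCompactSupport.of_compactSpace _)

/-- Key subgradient inequality: a convex Gateaux-differentiable functional lies above
its tangent plane. -/
lemma key_ineq {X : Type*} [MetricSpace X] [CompactSpace X]
    [MeasurableSpace X] [BorelSpace X]
    (f : C(X, ℝ) → ℝ) (hf : ConvexOn ℝ Set.univ f)
    (df : C(X, ℝ) → Measure X)
    (hdf : ∀ u v : C(X, ℝ),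
      HasDerivAt (fun t : ℝ => f (u + t • v)) (∫ x, v x ∂(df u)) 0)
    (w u : C(X, ℝ)) :
    f w + ∫ x, (u - w) x ∂(df w) ≤ f u := by
  set v : C(X, ℝ) := u - w with hv
  set φ : ℝ → ℝ := fun t => f (w + t • v) with hφ
  have hconv : ConvexOn ℝ Set.univ φ := by
    refine ⟨convex_univ, fun t1 _ t2 _ a b ha hb hab => ?_⟩
    have h1 : w + (a * t1 + b * t2) • v = a • (w + t1 • v) + b • (w + t2 • v) := by
      have : w = a • w + b • w := by
        rw [← add_smul, hab, one_smul]
      ext x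
      simp [smul_add, add_smul, mul_smul]
      have hx : w x * a + w x * b = w x := by rw [← mul_add, hab, mul_one]
      linarith
    calc φ (a • t1 + b • t2) = f (a • (w + t1 • v) + b • (w + t2 • v)) := by
          simp only [hφ, smul_eq_mul]
          rw [h1]
      _ ≤ a * f (w + t1 • v) + b * f (w + t2 • v) :=
          hf.2 (Set.mem_univ _) (Set.mem_univ _) ha hb hab
      _ = a * φ t1 + b * φ t2 := rfl
  have hder : HasDerivAt φ (∫ x, v x ∂(df w)) 0 := hdf w v
  have hs := hconv.le_slope_of_hasDerivAt (Set.mem_univ (0:ℝ)) (Set.mem_univ (1:ℝ))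
    one_pos hder
  have hslope : slope φ 0 1 = φ 1 - φ 0 := by
    simp [slope_def_field]
  rw [hslope] at hs
  have h0 : φ 0 = f w := by simp [hφ]
  have h1 : φ 1 = f u := by
    simp only [hφ, one_smul, hv]
    congr 1
    ext x; simp
  rw [h0, h1] at hs
  linarith

/-- If `u₀` is a critical point of `u ↦ 𝓕(u) − g(u)` where `𝓕(u) = −f(−u)`
(so that `d𝓕_{u₀} = df_{−u₀}`), then `μ₀ := d𝓕_{u₀}` minimizes `μ ↦ f*(μ) + g*(μ)` over
the probability measures `M₁(X)`. -/
theorem stmt1 {X : Type*} [MetricSpace X] [CompactSpace X]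
    [MeasurableSpace X] [BorelSpace X]
    (f g : C(X, ℝ) → ℝ)
    (hf : ConvexOn ℝ Set.univ f) (hg : ConvexOn ℝ Set.univ g)
    (df dg : C(X, ℝ) → Measure X)
    (hdfP : ∀ u, IsProbabilityMeasure (df u))
    (hdgP : ∀ u, IsProbabilityMeasure (dg u))
    (hdf : ∀ u v : C(X, ℝ),
      HasDerivAt (fun t : ℝ => f (u + t • v)) (∫ x, v x ∂(df u)) 0)
    (hdg : ∀ u v : C(X, ℝ),
      HasDerivAt (fun t : ℝ => g (u + t • v)) (∫ x, v x ∂(dg u)) 0)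
    (u₀ : C(X, ℝ))
    (hcrit : df (-u₀) = dg u₀) :
    ∀ μ : Measure X, IsProbabilityMeasure μ →
      (⨆ u : C(X, ℝ), (((∫ x, u x ∂(df (-u₀))) - f u : ℝ) : EReal))
        + (⨆ u : C(X, ℝ), (((∫ x, u x ∂(df (-u₀))) - g u : ℝ) : EReal))
      ≤ (⨆ u : C(X, ℝ), (((∫ x, u x ∂μ) - f u : ℝ) : EReal))
        + (⨆ u : C(X, ℝ), (((∫ x, u x ∂μ) - g u : ℝ) : EReal)) := by
  intro μ hμ
  set μ₀ := df (-u₀) with hμ₀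
  have hμ₀P : IsProbabilityMeasure μ₀ := hdfP _
  -- integral of difference splits
  have hint : ∀ (ν : Measure X), IsProbabilityMeasure ν → ∀ a b : C(X, ℝ),
      ∫ x, (a - b) x ∂ν = (∫ x, a x ∂ν) - ∫ x, b x ∂ν := by
    intro ν hν a b
    have := integral_sub (cm_integrable ν a) (cm_integrable ν b)
    simpa using this
  -- LHS bound: each sup over u₀-measure is ≤ corresponding value
  have hA : (⨆ u : C(X, ℝ), (((∫ x, u x ∂μ₀) - f u : ℝ) : EReal))
      ≤ (((∫ x, (-u₀ : C(X,ℝ)) x ∂μ₀) - f (-u₀) : ℝ) : EReal) := by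
    refine iSup_le fun u => ?_
    rw [EReal.coe_le_coe_iff]
    have hk := key_ineq f hf df hdf (-u₀) u
    rw [hint μ₀ hμ₀P u (-u₀)] at hk
    linarith
  have hB : (⨆ u : C(X, ℝ), (((∫ x, u x ∂μ₀) - g u : ℝ) : EReal))
      ≤ (((∫ x, u₀ x ∂μ₀) - g u₀ : ℝ) : EReal) := by
    refine iSup_le fun u => ?_
    rw [EReal.coe_le_coe_iff]
    have hk := key_ineq g hg dg hdg u₀ u
    rw [hint (dg u₀) (hdgP _) u u₀] at hk
    rw [hcrit]
    linarith
  -- RHS bounds: sup ≥ value at -u₀ resp. u₀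
  have hC : (((∫ x, (-u₀ : C(X,ℝ)) x ∂μ) - f (-u₀) : ℝ) : EReal)
      ≤ ⨆ u : C(X, ℝ), (((∫ x, u x ∂μ) - f u : ℝ) : EReal) :=
    le_iSup (fun u : C(X, ℝ) => (((∫ x, u x ∂μ) - f u : ℝ) : EReal)) (-u₀)
  have hD : (((∫ x, u₀ x ∂μ) - g u₀ : ℝ) : EReal)
      ≤ ⨆ u : C(X, ℝ), (((∫ x, u x ∂μ) - g u : ℝ) : EReal) :=
    le_iSup (fun u : C(X, ℝ) => (((∫ x, u x ∂μ) - g u : ℝ) : EReal)) u₀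
  -- the two "middle" real values coincide
  have hneg₀ : ∫ x, (-u₀ : C(X,ℝ)) x ∂μ₀ = -∫ x, u₀ x ∂μ₀ := by
    have := integral_neg (f := fun x => u₀ x) (μ := μ₀)
    simpa using this
  have hnegμ : ∫ x, (-u₀ : C(X,ℝ)) x ∂μ = -∫ x, u₀ x ∂μ := by
    have := integral_neg (f := fun x => u₀ x) (μ := μ)
    simpa using this
  calc (⨆ u : C(X, ℝ), (((∫ x, u x ∂μ₀) - f u : ℝ) : EReal))
        + (⨆ u : C(X, ℝ), (((∫ x, u x ∂μ₀) - g u : ℝ) : EReal))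
      ≤ (((∫ x, (-u₀ : C(X,ℝ)) x ∂μ₀) - f (-u₀) : ℝ) : EReal)
        + (((∫ x, u₀ x ∂μ₀) - g u₀ : ℝ) : EReal) := add_le_add hA hB
    _ = ((-f (-u₀) - g u₀ : ℝ) : EReal) := by
        rw [← EReal.coe_add, EReal.coe_eq_coe_iff, hneg₀]; ring
    _ = (((∫ x, (-u₀ : C(X,ℝ)) x ∂μ) - f (-u₀) : ℝ) : EReal)
        + (((∫ x, u₀ x ∂μ) - g u₀ : ℝ) : EReal) := by
        rw [← EReal.coe_add, EReal.coe_eq_coe_iff, hnegμ]; ring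
    _ ≤ (⨆ u : C(X, ℝ), (((∫ x, u x ∂μ) - f u : ℝ) : EReal))
        + (⨆ u : C(X, ℝ), (((∫ x, u x ∂μ) - g u : ℝ) : EReal)) := add_le_add hC hD
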